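/- If a monic integer polynomial p has all roots on or inside the unit circle and p(0) ≠ 0, then every root of p is a root of unity (Kronecker's theorem), and consequently m(p) = 0. -/

import Mathlib

noncomputable def logMahler (p : Polynomial ℂ) : ℝ :=
  ∫ t in (0:ℝ)..1, Real.log ‖p.eval (Complex.exp (2 * Real.pi * Complex.I * t))‖

open MeasureTheory intervalIntegral Real Set Polynomial

lemma intervalIntegrable_log01 {b : ℝ} (hb : 0 ≤ b) (hb1 : b ≤ 1) :
    IntervalIntegrable Real.log volume 0 b := by
  have h : IntervalIntegrable (fun x => -Real.log x) volume 0 b := by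
    apply intervalIntegrable_deriv_of_nonneg (g := fun x => x - x * Real.log x)
    · exact (continuous_id.sub Real.continuous_mul_log).continuousOn
    · intro x hx
      rw [min_eq_left hb, max_eq_right hb] at hx
      have := (hasDerivAt_id x).sub ((Real.hasDerivAt_mul_log hx.1.ne'))
      rw [show (1:ℝ) - (Real.log x + 1) = -Real.log x by ring] at this; exact this
    · intro x hx
      rw [min_eq_left hb, max_eq_right hb] at hx
      simp only [neg_nonneg]
      exact Real.log_nonpos hx.1.le (hx.2.le.trans hb1)
  have := h.neg
  simp only [Pi.neg_def] at this
  convert this using 1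
  ext x; simp

noncomputable def W (s : ℝ) : ℝ := Real.log |Real.sin (Real.pi * s)|

lemma W_meas : Measurable W := by
  exact (Real.measurable_log.comp ((Real.continuous_sin.comp
    (continuous_const.mul continuous_id)).measurable.abs))

lemma W_half : IntervalIntegrable W volume 0 (1/2) := by
  have key : ∀ s ∈ Ioc (0:ℝ) (1/2), |W s - Real.log s| ≤ Real.log π := by
    intro s hs
    have hπ := Real.pi_pos
    have h1 : Real.sin (π * s) ≤ π * s := Real.sin_le (by nlinarith [hs.1])
    have h2 : 2 * s ≤ Real.sin (π * s) := by
      have := Real.mul_le_sin (x := π * s) (by nlinarith [hs.1])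
        (by nlinarith [hs.2])
      have e : 2 / π * (π * s) = 2 * s := by field_simp
      linarith [e ▸ this]
    have hsin : 0 < Real.sin (π * s) := lt_of_lt_of_le (by nlinarith [hs.1]) h2
    have habs : |Real.sin (π * s)| = Real.sin (π * s) := abs_of_pos hsin
    rw [abs_le]
    constructor
    · have : Real.log (2 * s) ≤ W s := by
        rw [W, habs]; exact Real.log_le_log (by nlinarith [hs.1]) h2
      rw [Real.log_mul two_ne_zero hs.1.ne'] at this
      have h2π : Real.log 2 ≤ Real.log π := Real.log_le_log two_pos
        (by nlinarith [Real.pi_gt_three])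
      have hl2 : (0:ℝ) ≤ Real.log 2 := Real.log_nonneg one_le_two
      linarith
    · have : W s ≤ Real.log (π * s) := by
        rw [W, habs]; exact Real.log_le_log hsin h1
      rw [Real.log_mul hπ.ne' hs.1.ne'] at this
      linarith
  rw [intervalIntegrable_iff_integrableOn_Ioc_of_le (by norm_num)]
  have hlog : IntegrableOn Real.log (Ioc (0:ℝ) (1/2)) volume := by
    have := intervalIntegrable_log01 (b := 1/2) (by norm_num) (by norm_num)
    rwa [intervalIntegrable_iff_integrableOn_Ioc_of_le (by norm_num)] at this
  have hh : IntegrableOn (fun s => W s - Real.log s) (Ioc (0:ℝ) (1/2)) volume := by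
    apply Integrable.mono' (integrable_const (Real.log π))
    · exact (W_meas.sub Real.measurable_log).aestronglyMeasurable
    · exact (ae_restrict_iff' measurableSet_Ioc).2 (Filter.Eventually.of_forall
        (fun s hs => by simpa using key s hs))
  exact IntegrableOn.congr_fun (hlog.add hh) (fun s _ => by simp) measurableSet_Ioc

lemma W_sym (s : ℝ) : W (1 - s) = W s := by
  rw [W, W, mul_sub, mul_one, Real.sin_pi_sub]

lemma W_half' : IntervalIntegrable W volume (1/2) 1 := by
  have h := (W_half.comp_sub_left 1).symm
  norm_num at h
  have e : (fun x => W (1 - x)) = W := funext W_sym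
  rwa [e] at h

lemma W_one : IntervalIntegrable W volume 0 1 := W_half.trans W_half'

lemma W_sym_int : ∫ s in (1/2:ℝ)..1, W s = ∫ s in (0:ℝ)..(1/2), W s := by
  calc ∫ s in (1/2:ℝ)..1, W s = ∫ s in (1/2:ℝ)..1, W (1 - s) :=
        integral_congr (fun x _ => (W_sym x).symm)
    _ = ∫ s in (1-1:ℝ)..(1-1/2), W s := integral_comp_sub_left W 1
    _ = ∫ s in (0:ℝ)..(1/2), W s := by norm_num

lemma W_J2 : ∫ s in (0:ℝ)..1, W s = 2 * ∫ s in (0:ℝ)..(1/2), W s := by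
  rw [← integral_add_adjacent_intervals W_half W_half', W_sym_int]; ring

lemma W_double {s : ℝ} (h : s ∈ Ioo (0:ℝ) 1) :
    W s = Real.log 2 + W (s/2) + W ((1-s)/2) := by
  have hπ := Real.pi_pos
  have ha : 0 < Real.sin (π * (s/2)) :=
    Real.sin_pos_of_pos_of_lt_pi (by nlinarith [h.1]) (by nlinarith [h.2])
  have hb : 0 < Real.cos (π * (s/2)) := by
    apply Real.cos_pos_of_mem_Ioo
    constructor <;> [nlinarith [h.1]; nlinarith [h.2]]
  have hsin : Real.sin (π * s) = 2 * Real.sin (π * (s/2)) * Real.cos (π * (s/2)) := by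
    rw [← Real.sin_two_mul]; ring_nf
  have hc : Real.sin (π * ((1-s)/2)) = Real.cos (π * (s/2)) := by
    rw [← Real.sin_pi_div_two_sub]; ring_nf
  rw [W, W, W, hsin, hc, abs_of_pos (by positivity), abs_of_pos ha, abs_of_pos hb,
    Real.log_mul (by positivity) hb.ne', Real.log_mul two_ne_zero ha.ne']

lemma W_comp_div : IntervalIntegrable (fun s => W (s/2)) volume 0 1 := by
  have h := W_half.comp_mul_right (c := 1/2)
  norm_num at h
  have e : (fun s : ℝ => W (s/2)) = fun s => W (s * (1/2)) := by
    funext s; congr 1; ring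
  rw [e]
  exact h

lemma W_comp_div' : IntervalIntegrable (fun s => W ((1-s)/2)) volume 0 1 := by
  have h := (W_comp_div.comp_sub_left 1).symm
  norm_num at h
  exact h

lemma W_integral : ∫ s in (0:ℝ)..1, W s = - Real.log 2 := by
  have h1 : ∀ᵐ x : ℝ ∂volume, x ≠ 1 := by
    have : volume ({1} : Set ℝ) = 0 := volume_singleton
    filter_upwards [measure_eq_zero_iff_ae_notMem.mp this] with x hx
    simpa using hx
  have hcongr : ∫ s in (0:ℝ)..1, W s
      = ∫ s in (0:ℝ)..1, (Real.log 2 + W (s/2) + W ((1-s)/2)) := by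
    apply intervalIntegral.integral_congr_ae
    filter_upwards [h1] with x hx hmem
    rw [uIoc_of_le (by norm_num : (0:ℝ) ≤ 1)] at hmem
    exact W_double ⟨hmem.1, lt_of_le_of_ne hmem.2 hx⟩
  have ia : IntervalIntegrable (fun _ : ℝ => Real.log 2) volume 0 1 := intervalIntegrable_const
  have hsum : ∫ s in (0:ℝ)..1, (Real.log 2 + W (s/2) + W ((1-s)/2))
      = Real.log 2 + (∫ s in (0:ℝ)..1, W (s/2)) + ∫ s in (0:ℝ)..1, W ((1-s)/2) := by
    rw [integral_add (ia.add W_comp_div) W_comp_div', integral_add ia W_comp_div]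
    simp
  have hd : ∫ s in (0:ℝ)..1, W (s/2) = ∫ s in (0:ℝ)..1, W s := by
    rw [integral_comp_div (a := (0:ℝ)) (b := 1) (c := 2) W two_ne_zero, W_J2]
    norm_num
  have he : ∫ s in (0:ℝ)..1, W ((1-s)/2) = ∫ s in (0:ℝ)..1, W s := by
    calc ∫ s in (0:ℝ)..1, W ((1-s)/2) = ∫ s in (1-1:ℝ)..(1-0), W (s/2) :=
          integral_comp_sub_left (fun u => W (u/2)) 1
      _ = ∫ s in (0:ℝ)..1, W (s/2) := by norm_num
      _ = ∫ s in (0:ℝ)..1, W s := hd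
  have := hcongr
  rw [hsum, hd, he] at this
  linarith

noncomputable def ec (t : ℝ) : ℂ := Complex.exp (2 * Real.pi * Complex.I * t)

lemma ec_abs (t : ℝ) : ‖ec t‖ = 1 := by
  rw [ec, Complex.norm_exp]
  norm_num [Complex.mul_re, Complex.mul_im]

lemma ec_add (s t : ℝ) : ec (s + t) = ec s * ec t := by
  rw [ec, ec, ec, ← Complex.exp_add]; congr 1; push_cast; ring

lemma ec_per : Function.Periodic ec 1 := by
  intro s
  have h1 : ec 1 = 1 := by
    rw [ec, Complex.ofReal_one, mul_one, Complex.exp_two_pi_mul_I]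
  rw [ec_add, h1, mul_one]

lemma abs_ec_sub_one (s : ℝ) :
    ‖ec s - 1‖ = 2 * |Real.sin (Real.pi * s)| := by
  have h : ec s - 1 = Complex.ofReal (Real.cos (2 * (Real.pi * s)) - 1)
      + Complex.ofReal (Real.sin (2 * (Real.pi * s))) * Complex.I := by
    have : ec s = Complex.exp ((2 * (Real.pi * s) : ℝ) * Complex.I) := by
      rw [ec]; congr 1; push_cast; ring
    rw [this, Complex.exp_mul_I]
    push_cast; ring
  rw [h, Complex.norm_add_mul_I]
  have hc : Real.cos (2 * (Real.pi * s)) = 1 - 2 * Real.sin (Real.pi * s) ^ 2 := by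
    rw [Real.cos_two_mul]
    nlinarith [Real.sin_sq_add_cos_sq (Real.pi * s)]
  have : (Real.cos (2 * (Real.pi * s)) - 1) ^ 2 + Real.sin (2 * (Real.pi * s)) ^ 2
      = (2 * |Real.sin (Real.pi * s)|) ^ 2 := by
    rw [Real.sin_two_mul, hc]
    have h2 := Real.sin_sq_add_cos_sq (Real.pi * s)
    have h3 : |Real.sin (Real.pi * s)| ^ 2 = Real.sin (Real.pi * s) ^ 2 := sq_abs _
    nlinarith
  rw [this, Real.sqrt_sq (by positivity)]

noncomputable def G (s : ℝ) : ℝ := Real.log (‖ec s - 1‖)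

lemma G_per : Function.Periodic G 1 := fun s => by rw [G, G, ec_per s]

lemma G_eq {s : ℝ} (h : Real.sin (Real.pi * s) ≠ 0) : G s = Real.log 2 + W s := by
  rw [G, abs_ec_sub_one, Real.log_mul two_ne_zero (by simpa using h), W]

lemma G_int01 : IntervalIntegrable G volume 0 1 := by
  rw [intervalIntegrable_iff_integrableOn_Ioc_of_le (by norm_num)]
  have hW : IntegrableOn (fun s => Real.log 2 + W s) (Ioc (0:ℝ) 1) volume := by
    have := (_root_.intervalIntegrable_const (c := Real.log 2)).add W_one
    rwa [intervalIntegrable_iff_integrableOn_Ioc_of_le (by norm_num)] at this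
  apply hW.congr
  have h1 : ∀ᵐ x : ℝ ∂volume, x ≠ 1 := by
    filter_upwards [measure_eq_zero_iff_ae_notMem.mp (volume_singleton (a := (1:ℝ)))] with x hx
    simpa using hx
  refine (ae_restrict_iff' measurableSet_Ioc).2 ?_
  filter_upwards [h1] with x hx hmem
  refine (G_eq ?_).symm
  have hx1 : x ∈ Ioo (0:ℝ) 1 := ⟨hmem.1, lt_of_le_of_ne hmem.2 hx⟩
  exact (Real.sin_pos_of_pos_of_lt_pi (by nlinarith [Real.pi_pos, hx1.1])
    (by nlinarith [Real.pi_pos, hx1.2])).ne'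

lemma G_val : ∫ s in (0:ℝ)..1, G s = 0 := by
  have h1 : ∀ᵐ x : ℝ ∂volume, x ≠ 1 := by
    filter_upwards [measure_eq_zero_iff_ae_notMem.mp (volume_singleton (a := (1:ℝ)))] with x hx
    simpa using hx
  have hcongr : ∫ s in (0:ℝ)..1, G s = ∫ s in (0:ℝ)..1, (Real.log 2 + W s) := by
    apply intervalIntegral.integral_congr_ae
    filter_upwards [h1] with x hx hmem
    rw [uIoc_of_le (by norm_num : (0:ℝ) ≤ 1)] at hmem
    have hx1 : x ∈ Ioo (0:ℝ) 1 := ⟨hmem.1, lt_of_le_of_ne hmem.2 hx⟩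
    exact G_eq (Real.sin_pos_of_pos_of_lt_pi (by nlinarith [Real.pi_pos, hx1.1])
      (by nlinarith [Real.pi_pos, hx1.2])).ne'
  rw [hcongr, integral_add intervalIntegrable_const W_one, W_integral]
  simp

lemma periodic_II {f : ℝ → ℝ} (hp : Function.Periodic f 1)
    (h01 : IntervalIntegrable f volume 0 1) (a : ℝ) :
    IntervalIntegrable f volume a (a + 1) := by
  set r := Int.fract a with hr
  have hr0 : 0 ≤ r := Int.fract_nonneg a
  have hr1 : r < 1 := Int.fract_lt_one a
  have h0r : IntervalIntegrable f volume 0 r := by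
    apply h01.mono_set
    rw [uIcc_of_le hr0, uIcc_of_le (by norm_num : (0:ℝ) ≤ 1)]
    exact Icc_subset_Icc le_rfl hr1.le
  have hr1' : IntervalIntegrable f volume r 1 := by
    apply h01.mono_set
    rw [uIcc_of_le hr1.le, uIcc_of_le (by norm_num : (0:ℝ) ≤ 1)]
    exact Icc_subset_Icc hr0 le_rfl
  have h11r : IntervalIntegrable f volume 1 (r + 1) := by
    have h := h0r.comp_sub_right 1
    have e : (fun x => f (x - 1)) = f := funext fun x => hp.sub_eq x
    rw [e] at h
    simpa using h
  have hrr1 : IntervalIntegrable f volume r (r + 1) := hr1'.trans h11r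
  have h := hrr1.comp_sub_right (⌊a⌋ : ℤ)
  have e : (fun x => f (x - (⌊a⌋ : ℤ))) = f := by
    funext x
    have := hp.sub_int_mul_eq (x := x) ⌊a⌋
    simpa using this
  rw [e] at h
  have e1 : r + (⌊a⌋ : ℤ) = a := by rw [hr, Int.fract]; ring
  have e2 : r + 1 + (⌊a⌋ : ℤ) = a + 1 := by rw [add_right_comm, e1]
  rwa [e1, e2] at h

lemma L1 {α : ℂ} (hα : ‖α‖ = 1) :
    IntervalIntegrable (fun t => Real.log (‖ec t - α‖)) volume 0 1 ∧
    ∫ t in (0:ℝ)..1, Real.log (‖ec t - α‖) = 0 := by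
  set θ := Complex.arg α / (2 * Real.pi) with hθdef
  have hπ := Real.pi_pos
  have hθ : ec θ = α := by
    rw [ec, hθdef]
    have : (2 * Real.pi * Complex.I * ((Complex.arg α / (2 * Real.pi) : ℝ) : ℂ))
        = (Complex.arg α : ℂ) * Complex.I := by
      have hπ' : (Real.pi : ℂ) ≠ 0 := by exact_mod_cast hπ.ne'
      push_cast
      field_simp
    rw [this]
    have := Complex.norm_mul_exp_arg_mul_I α
    rwa [hα, Complex.ofReal_one, one_mul] at this
  have key : (fun t => Real.log (‖ec t - α‖)) = fun t => G (t - θ) := by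
    funext t
    rw [G]
    congr 1
    have : ec θ * (ec (t - θ) - 1) = ec t - α := by
      rw [mul_sub, ← ec_add, mul_one, hθ, show θ + (t - θ) = t by ring]
    rw [← this, norm_mul, ec_abs, one_mul]
  constructor
  · rw [key]
    have h := (periodic_II G_per G_int01 (-θ)).comp_sub_right θ
    rw [show -θ + θ = 0 by ring, show -θ + 1 + θ = 1 by ring] at h
    exact h
  · rw [key]
    rw [integral_comp_sub_right (fun s => G s) θ]
    have := G_per.intervalIntegral_add_eq (0 - θ) 0
    rw [show (0:ℝ) - θ + 1 = 1 - θ by ring, zero_add] at this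
    rw [this, G_val]

lemma ec_pow (t : ℝ) (n : ℕ) : ec t ^ n = ec (n * t) := by
  rw [ec, ec, ← Complex.exp_nat_mul]
  congr 1; push_cast; ring

lemma ctble {α : ℂ} (hn : ∃ n : ℕ, 0 < n ∧ α ^ n = 1) :
    Set.Countable {t : ℝ | ec t = α} := by
  obtain ⟨n, hn0, hα⟩ := hn
  have hsub : {t : ℝ | ec t = α} ⊆ Set.range (fun k : ℤ => (k : ℝ) / n) := by
    intro t ht
    have h1 : ec (n * t) = 1 := by
      rw [← ec_pow, Set.mem_setOf_eq.mp ht, hα]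
    rw [ec, Complex.exp_eq_one_iff] at h1
    obtain ⟨k, hk⟩ := h1
    refine ⟨k, ?_⟩
    have hπ : (Real.pi : ℂ) ≠ 0 := by
      exact_mod_cast Real.pi_pos.ne'
    have hA : (2 * (Real.pi : ℂ) * Complex.I) ≠ 0 :=
      mul_ne_zero (mul_ne_zero two_ne_zero hπ) Complex.I_ne_zero
    rw [mul_comm ((k : ℂ)) (2 * (Real.pi : ℂ) * Complex.I)] at hk
    push_cast at hk
    have h2 : ((n : ℂ) * (t : ℂ)) = (k : ℂ) := mul_left_cancel₀ hA hk
    have h3 : (n : ℝ) * t = (k : ℝ) := by exact_mod_cast h2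
    field_simp
    rw [← h3]
  exact (Set.countable_range _).mono hsub

lemma Lsum : ∀ l : List ℂ,
    (∀ α ∈ l, ‖α‖ = 1 ∧ ∃ n : ℕ, 0 < n ∧ α ^ n = 1) →
    IntervalIntegrable
      (fun t => Real.log (‖(l.map (fun α => ec t - α)).prod‖)) volume 0 1 ∧
    ∫ t in (0:ℝ)..1, Real.log (‖(l.map (fun α => ec t - α)).prod‖) = 0 := by
  intro l
  induction l with
  | nil =>
    intro _
    constructor
    · simpa using (_root_.intervalIntegrable_const (μ := volume) (a := (0:ℝ)) (b := 1)
        (c := (0:ℝ)))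
    · simp
  | cons α l ih =>
    intro h
    have hα := h α List.mem_cons_self
    have hl : ∀ β ∈ l, ‖β‖ = 1 ∧ ∃ n : ℕ, 0 < n ∧ β ^ n = 1 :=
      fun β hβ => h β (List.mem_cons_of_mem α hβ)
    obtain ⟨ihint, ihval⟩ := ih hl
    obtain ⟨l1int, l1val⟩ := L1 hα.1
    -- null set
    set N : Set ℝ := {t | ec t = α} ∪ ⋃ β ∈ l, {t | ec t = β} with hN
    have hNc : N.Countable := by
      apply Set.Countable.union (ctble hα.2)
      apply Set.Countable.biUnion (l.finite_toSet.countable)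
      intro β hβ
      exact ctble (hl β hβ).2
    have hae : ∀ᵐ t : ℝ ∂volume, t ∉ N := by
      rw [← measure_eq_zero_iff_ae_notMem]
      exact hNc.measure_zero volume
    have heq : ∀ t ∉ N,
        Real.log (‖((α :: l).map (fun β => ec t - β)).prod‖)
          = Real.log (‖ec t - α‖)
            + Real.log (‖(l.map (fun β => ec t - β)).prod‖) := by
      intro t ht
      rw [hN, Set.mem_union, not_or] at ht
      have h1 : ec t - α ≠ 0 := by
        intro hc
        exact ht.1 (by simpa [sub_eq_zero] using hc)
      have h2 : (l.map (fun β => ec t - β)).prod ≠ 0 := by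
        apply List.prod_ne_zero
        intro hx
        rw [List.mem_map] at hx
        obtain ⟨β, hβ, hc⟩ := hx
        apply ht.2
        rw [Set.mem_iUnion₂]
        exact ⟨β, hβ, by simpa [eq_comm, sub_eq_zero] using hc⟩
      rw [List.map_cons, List.prod_cons, norm_mul, Real.log_mul]
      · simpa [sub_eq_zero] using h1
      · simpa using h2
    constructor
    · rw [intervalIntegrable_iff_integrableOn_Ioc_of_le (by norm_num)]
      have base := l1int.add ihint
      rw [intervalIntegrable_iff_integrableOn_Ioc_of_le (by norm_num)] at base
      apply base.congr
      refine (ae_restrict_iff' measurableSet_Ioc).2 ?_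
      filter_upwards [hae] with t ht _
      exact (heq t ht).symm
    · rw [intervalIntegral.integral_congr_ae (g := fun t =>
        Real.log (‖ec t - α‖)
          + Real.log (‖(l.map (fun β => ec t - β)).prod‖))
        (by filter_upwards [hae] with t ht _; exact heq t ht),
        integral_add l1int ihint, l1val, ihval, add_zero]

lemma multiset_prod_le_one : ∀ s : Multiset ℝ, (∀ x ∈ s, 0 ≤ x) → (∀ x ∈ s, x ≤ 1) →
    s.prod ≤ 1 := by
  intro s
  induction s using Multiset.induction with
  | empty => simp
  | cons a s ih =>
    intro h0 h1
    rw [Multiset.prod_cons]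
    have ha0 := h0 a (Multiset.mem_cons_self a s)
    have ha1 := h1 a (Multiset.mem_cons_self a s)
    have hs := ih (fun x hx => h0 x (Multiset.mem_cons_of_mem hx))
      (fun x hx => h1 x (Multiset.mem_cons_of_mem hx))
    have hsnn : 0 ≤ s.prod := Multiset.prod_nonneg
      (fun x hx => h0 x (Multiset.mem_cons_of_mem hx))
    nlinarith

theorem kron (p : Polynomial ℤ) (hmonic : p.Monic) (h0 : p.coeff 0 ≠ 0)
    (hroots : ∀ z : ℂ, (p.map (Int.castRingHom ℂ)).IsRoot z → ‖z‖ ≤ 1) :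
    ∀ z : ℂ, (p.map (Int.castRingHom ℂ)).IsRoot z →
      ‖z‖ = 1 ∧ ∃ n : ℕ, 0 < n ∧ z ^ n = 1 := by
  intro z hz
  set P := p.map (Int.castRingHom ℂ) with hP
  have hP0 : P.coeff 0 ≠ 0 := by
    rw [hP, Polynomial.coeff_map]
    intro hc
    rw [eq_intCast, Int.cast_eq_zero] at hc
    exact h0 hc
  have hPz0 : ∀ w : ℂ, P.IsRoot w → w ≠ 0 := by
    intro w hw hw0
    subst hw0
    exact hP0 (by rw [Polynomial.coeff_zero_eq_eval_zero]; exact Polynomial.IsRoot.def.mp hw)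
  have halg : algebraMap ℤ ℂ = Int.castRingHom ℂ := rfl
  have hint : IsIntegral ℤ z := by
    refine ⟨p, hmonic, ?_⟩
    rw [halg, Polynomial.eval₂_eq_eval_map]
    exact hz
  set q := minpoly ℤ z with hq
  have hqmon : q.Monic := minpoly.monic hint
  have hdvd : q ∣ p := minpoly.isIntegrallyClosed_dvd hint (by
    rw [Polynomial.aeval_def, Polynomial.eval₂_eq_eval_map, halg]; exact hz)
  set Q := q.map (Int.castRingHom ℂ) with hQ
  have hQdvd : Q ∣ P := Polynomial.map_dvd _ hdvd
  have hQmon : Q.Monic := hqmon.map _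
  have hQroot_le : ∀ w : ℂ, Q.IsRoot w → ‖w‖ ≤ 1 :=
    fun w hw => hroots w (hw.dvd hQdvd)
  have hQroot_ne : ∀ w : ℂ, Q.IsRoot w → w ≠ 0 :=
    fun w hw => hPz0 w (hw.dvd hQdvd)
  -- product of roots
  have hQsplit : Q = (Q.roots.map (fun a => X - C a)).prod :=
    (IsAlgClosed.splits _).eq_prod_roots_of_monic hQmon
  have heval0 : ‖Q.eval 0‖ = (Q.roots.map (fun a => ‖a‖)).prod := by
    conv_lhs => rw [hQsplit]
    rw [Polynomial.eval_multiset_prod, Multiset.map_map]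
    rw [show ((fun (q : Polynomial ℂ) => q.eval 0) ∘ fun a => X - C a)
      = fun a => (0 : ℂ) - a from funext (fun a => by simp)]
    change normHom (α := ℂ) _ = _
    rw [map_multiset_prod, Multiset.map_map]
    congr 1
    funext
    simp
  have hcoeff : Q.eval 0 = ((q.coeff 0 : ℤ) : ℂ) := by
    rw [← Polynomial.coeff_zero_eq_eval_zero, hQ, Polynomial.coeff_map]; rfl
  have hc0 : q.coeff 0 ≠ 0 := by
    intro hc
    refine hQroot_ne 0 ?_ rfl
    show Q.eval 0 = 0
    rw [← Polynomial.coeff_zero_eq_eval_zero, hQ, Polynomial.coeff_map, hc]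
    simp
  have hprod_ge : 1 ≤ (Q.roots.map (fun a => ‖a‖)).prod := by
    rw [← heval0, hcoeff]
    have : (1 : ℝ) ≤ |(q.coeff 0 : ℝ)| := by
      have := Int.one_le_abs hc0
      exact_mod_cast this
    rw [Complex.norm_intCast]
    exact_mod_cast this
  have habs_one : ∀ w ∈ Q.roots, ‖w‖ = 1 := by
    intro w hw
    have hle := hQroot_le w ((Polynomial.mem_roots hQmon.ne_zero).mp hw)
    have hrest : ((Q.roots.erase w).map (fun a => ‖a‖)).prod ≤ 1 := by
      apply multiset_prod_le_one
      · intro x hx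
        obtain ⟨a, _, rfl⟩ := Multiset.mem_map.mp hx
        exact (norm_nonneg a)
      · intro x hx
        obtain ⟨a, ha, rfl⟩ := Multiset.mem_map.mp hx
        exact hQroot_le a ((Polynomial.mem_roots hQmon.ne_zero).mp
          (Multiset.mem_of_mem_erase ha))
    have hrest0 : 0 ≤ ((Q.roots.erase w).map (fun a => ‖a‖)).prod :=
      Multiset.prod_nonneg (fun x hx => by
        obtain ⟨a, _, rfl⟩ := Multiset.mem_map.mp hx
        exact norm_nonneg a)
    have hsplit : (Q.roots.map (fun a => ‖a‖)).prod
        = ‖w‖ * ((Q.roots.erase w).map (fun a => ‖a‖)).prod := by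
      conv_lhs => rw [← Multiset.cons_erase hw]
      rw [Multiset.map_cons, Multiset.prod_cons]
    rw [hsplit] at hprod_ge
    have := norm_nonneg w
    nlinarith
  -- z is a root of Q
  have hzQ : z ∈ Q.roots := by
    rw [Polynomial.mem_roots hQmon.ne_zero]
    show Q.eval z = 0
    rw [hQ, Polynomial.eval_map, ← halg, ← Polynomial.aeval_def, hq]
    exact minpoly.aeval ℤ z
  refine ⟨habs_one z hzQ, ?_⟩
  -- number field argument
  have hQint : IsIntegral ℚ z := hint.tower_top
  let K := IntermediateField.adjoin ℚ ({z} : Set ℂ)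
  haveI : FiniteDimensional ℚ K := IntermediateField.adjoin.finiteDimensional hQint
  haveI : NumberField K := ⟨⟩
  set x : K := IntermediateField.AdjoinSimple.gen ℚ z with hx
  have hax : algebraMap K ℂ x = z := IntermediateField.AdjoinSimple.algebraMap_gen ℚ z
  have hinj : Function.Injective (algebraMap K ℂ) := (algebraMap K ℂ).injective
  have hxint : IsIntegral ℤ x := by
    rw [← isIntegral_algebraMap_iff hinj, hax]; exact hint
  have hnorm : ∀ φ : K →+* ℂ, ‖φ x‖ = 1 := by
    intro φ
    have hmin : minpoly ℚ x = minpoly ℚ z := by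
      rw [← hax, minpoly.algebraMap_eq hinj]
    have haev : Polynomial.aeval (φ x) (minpoly ℚ x) = 0 := by
      have h := Polynomial.aeval_algHom_apply φ.toRatAlgHom x (minpoly ℚ x)
      rw [minpoly.aeval, map_zero] at h
      exact h
    -- φ x is a root of Q
    have hmap : (minpoly ℚ z).map (algebraMap ℚ ℂ) = Q := by
      rw [minpoly.isIntegrallyClosed_eq_field_fractions' ℚ hint, Polynomial.map_map, hQ,
        show (algebraMap ℚ ℂ).comp (algebraMap ℤ ℚ) = Int.castRingHom ℂ from
          Subsingleton.elim _ _, hq]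
    have hroot : Q.IsRoot (φ x) := by
      have h1 : Polynomial.aeval (φ x) (minpoly ℚ z) = 0 := by rw [← hmin]; exact haev
      have h2 : Polynomial.eval (φ x) ((minpoly ℚ z).map (algebraMap ℚ ℂ)) = 0 := by
        rw [Polynomial.eval_map, ← Polynomial.aeval_def]; exact h1
      rw [hmap] at h2
      exact h2
    have : φ x ∈ Q.roots := (Polynomial.mem_roots hQmon.ne_zero).mpr hroot
    exact habs_one _ this
  obtain ⟨n, hn, hxn⟩ := NumberField.Embeddings.pow_eq_one_of_norm_eq_one K ℂ hxint hnorm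
  refine ⟨n, hn, ?_⟩
  rw [← hax, ← map_pow, hxn, map_one]

theorem stmt3 (p : Polynomial ℤ) (hmonic : p.Monic) (h0 : p.coeff 0 ≠ 0)
    (hroots : ∀ z : ℂ, (p.map (Int.castRingHom ℂ)).IsRoot z → ‖z‖ ≤ 1) :
    (∀ z : ℂ, (p.map (Int.castRingHom ℂ)).IsRoot z → ∃ n : ℕ, 0 < n ∧ z ^ n = 1) ∧
    logMahler (p.map (Int.castRingHom ℂ)) = 0 := by
  have hk := kron p hmonic h0 hroots
  refine ⟨fun z hz => (hk z hz).2, ?_⟩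
  set P := p.map (Int.castRingHom ℂ) with hP
  have hPmon : P.Monic := hmonic.map _
  have hPsplit : P = (P.roots.map (fun a => X - C a)).prod :=
    (IsAlgClosed.splits _).eq_prod_roots_of_monic hPmon
  set l := P.roots.toList with hl
  have heval : ∀ w : ℂ, P.eval w = ((l.map (fun α => w - α)).prod) := by
    intro w
    conv_lhs => rw [hPsplit]
    rw [Polynomial.eval_multiset_prod, Multiset.map_map]
    rw [show ((fun (q : Polynomial ℂ) => q.eval w) ∘ fun a => X - C a)
      = fun a => w - a from funext (fun a => by simp)]
    rw [hl, ← Multiset.coe_toList P.roots, Multiset.map_coe, Multiset.prod_coe,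
      Multiset.coe_toList]
  have hmem : ∀ α ∈ l, ‖α‖ = 1 ∧ ∃ n : ℕ, 0 < n ∧ α ^ n = 1 := by
    intro α hα
    have : α ∈ P.roots := by rwa [hl, Multiset.mem_toList] at hα
    exact hk α ((Polynomial.mem_roots hPmon.ne_zero).mp this)
  have hI := (Lsum l hmem).2
  rw [logMahler]
  refine Eq.trans ?_ hI
  apply intervalIntegral.integral_congr
  intro t _
  show Real.log (‖P.eval (Complex.exp (2 * Real.pi * Complex.I * t))‖)
    = Real.log (‖(l.map (fun α => ec t - α)).prod‖)
  rw [heval]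
  rfl
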